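/- Let α > 1, let p be a probability vector on Fin m, let ρ_1, …, ρ_m be density matrices on ℂ^d, and let σ be a positive definite density matrix on ℂ^d. Set ζ := (Σ_x p_x ρ_x^α)^{1/α} and μ := ζ / tr(ζ). Then (1/(α−1)) · log₂ tr((Σ_x p_x ρ_x^α) σ^{1−α}) ≥ (α/(α−1)) · log₂ tr(ζ), i.e. D_α(ρ_{XQ}‖ρ_X ⊗ σ) ≥ χ_α({p_x, ρ_x}), with equality if and only if σ = μ. -/

import Mathlib

open Matrix ComplexOrder

/-- Matrix power via functional calculus on eigenvalues, with the convention `0 ^ β = 0`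
(matrices that are not Hermitian are sent to `0`). -/
noncomputable def mpow {d : ℕ} (A : Matrix (Fin d) (Fin d) ℂ) (β : ℝ) :
    Matrix (Fin d) (Fin d) ℂ :=
  if hA : A.IsHermitian then
    (hA.eigenvectorUnitary : Matrix (Fin d) (Fin d) ℂ) *
      Matrix.diagonal (fun i =>
        ((if hA.eigenvalues i = 0 then (0 : ℝ) else hA.eigenvalues i ^ β : ℝ) : ℂ)) *
      star (hA.eigenvectorUnitary : Matrix (Fin d) (Fin d) ℂ)
  else 0

namespace HolevoAux
variable {d : ℕ}


lemma diag_exchange (P : Matrix (Fin d) (Fin d) ℂ) (e e' : Fin d → ℝ)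
    (h : Matrix.diagonal (fun i => (e i : ℂ)) * P = P * Matrix.diagonal (fun i => (e' i : ℂ)))
    (f : ℝ → ℝ) :
    Matrix.diagonal (fun i => (f (e i) : ℂ)) * P
      = P * Matrix.diagonal (fun i => (f (e' i) : ℂ)) := by
  ext i j
  have h' : (e i : ℂ) * P i j = P i j * (e' j : ℂ) := by
    have := congrFun (congrFun h i) j
    simpa [Matrix.diagonal_mul, Matrix.mul_diagonal] using this
  simp only [Matrix.diagonal_mul, Matrix.mul_diagonal]
  rcases eq_or_ne (P i j) 0 with hP | hP
  · simp [hP]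
  · have he : (e i : ℂ) = (e' j : ℂ) := by
      rw [mul_comm] at h'
      exact mul_left_cancel₀ hP h'
    have : e i = e' j := Complex.ofReal_inj.mp he
    rw [this, mul_comm]

lemma mpow_unitary_conj (U : Matrix.unitaryGroup (Fin d) ℂ) (e : Fin d → ℝ) (β : ℝ) :
    mpow ((U : Matrix (Fin d) (Fin d) ℂ) * Matrix.diagonal (fun i => (e i : ℂ)) *
        star (U : Matrix (Fin d) (Fin d) ℂ)) β
      = (U : Matrix (Fin d) (Fin d) ℂ) *
          Matrix.diagonal (fun i => ((if e i = 0 then (0 : ℝ) else e i ^ β : ℝ) : ℂ)) *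
          star (U : Matrix (Fin d) (Fin d) ℂ) := by
  set Um : Matrix (Fin d) (Fin d) ℂ := (U : Matrix (Fin d) (Fin d) ℂ) with hUm
  have hUsU : star Um * Um = 1 := Matrix.mem_unitaryGroup_iff'.mp U.2
  have hUUs : Um * star Um = 1 := Matrix.mem_unitaryGroup_iff.mp U.2
  have hherm : Matrix.IsHermitian (Matrix.diagonal (fun i => (e i : ℂ))) :=
    Matrix.isHermitian_diagonal_iff.mpr fun i => Complex.conj_ofReal _
  have hM : (Um * Matrix.diagonal (fun i => (e i : ℂ)) * star Um).IsHermitian := by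
    simpa [Matrix.star_eq_conjTranspose] using Matrix.isHermitian_mul_mul_conjTranspose Um hherm
  rw [mpow, dif_pos hM]
  set V : Matrix (Fin d) (Fin d) ℂ := (hM.eigenvectorUnitary : Matrix (Fin d) (Fin d) ℂ) with hV
  have hVsV : star V * V = 1 := Matrix.mem_unitaryGroup_iff'.mp hM.eigenvectorUnitary.2
  have hVVs : V * star V = 1 := Matrix.mem_unitaryGroup_iff.mp hM.eigenvectorUnitary.2
  have hspec : Um * Matrix.diagonal (fun i => (e i : ℂ)) * star Um
      = V * Matrix.diagonal (fun i => (hM.eigenvalues i : ℂ)) * star V := by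
    convert hM.spectral_theorem using 2
    rfl
  set P : Matrix (Fin d) (Fin d) ℂ := star V * Um with hP
  have hPU : P * star Um = star V := by
    rw [hP, mul_assoc, hUUs, mul_one]
  have hVP : V * P = Um := by
    rw [hP, ← mul_assoc, hVVs, one_mul]
  have h1 : Matrix.diagonal (fun i => (hM.eigenvalues i : ℂ)) * P
      = P * Matrix.diagonal (fun i => (e i : ℂ)) := by
    have e1 : star V * (V * Matrix.diagonal (fun i => (hM.eigenvalues i : ℂ)) * star V) * Um
        = Matrix.diagonal (fun i => (hM.eigenvalues i : ℂ)) * P := by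
      rw [hP]
      rw [show star V * (V * Matrix.diagonal (fun i => (hM.eigenvalues i : ℂ)) * star V) * Um
          = (star V * V) * Matrix.diagonal (fun i => (hM.eigenvalues i : ℂ)) * (star V * Um) by
        noncomm_ring]
      rw [hVsV, one_mul]
    have e2 : star V * (Um * Matrix.diagonal (fun i => (e i : ℂ)) * star Um) * Um
        = P * Matrix.diagonal (fun i => (e i : ℂ)) := by
      rw [hP]
      rw [show star V * (Um * Matrix.diagonal (fun i => (e i : ℂ)) * star Um) * Um
          = (star V * Um) * Matrix.diagonal (fun i => (e i : ℂ)) * (star Um * Um) by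
        noncomm_ring]
      rw [hUsU, mul_one]
    rw [← e1, ← e2]
    exact congrArg (fun X => star V * X * Um) hspec.symm
  have h2 := diag_exchange P hM.eigenvalues e h1 (fun t => if t = 0 then 0 else t ^ β)
  calc V * Matrix.diagonal
        (fun i => ((if hM.eigenvalues i = 0 then (0:ℝ) else hM.eigenvalues i ^ β : ℝ) : ℂ)) * star V
      = V * Matrix.diagonal
        (fun i => ((if hM.eigenvalues i = 0 then (0:ℝ) else hM.eigenvalues i ^ β : ℝ) : ℂ)) *
          (P * star Um) := by rw [hPU]
    _ = V * (Matrix.diagonal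
        (fun i => ((if hM.eigenvalues i = 0 then (0:ℝ) else hM.eigenvalues i ^ β : ℝ) : ℂ)) * P) *
          star Um := by noncomm_ring
    _ = V * (P * Matrix.diagonal (fun i => ((if e i = 0 then (0:ℝ) else e i ^ β : ℝ) : ℂ))) *
          star Um := by rw [h2]
    _ = (V * P) * Matrix.diagonal (fun i => ((if e i = 0 then (0:ℝ) else e i ^ β : ℝ) : ℂ)) *
          star Um := by noncomm_ring
    _ = Um * Matrix.diagonal (fun i => ((if e i = 0 then (0:ℝ) else e i ^ β : ℝ) : ℂ)) *
          star Um := by rw [hVP]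


lemma posSemidef_conj (U : Matrix.unitaryGroup (Fin d) ℂ) (c : Fin d → ℝ)
    (hc : ∀ i, 0 ≤ c i) :
    ((U : Matrix (Fin d) (Fin d) ℂ) * Matrix.diagonal (fun i => (c i : ℂ)) *
      star (U : Matrix (Fin d) (Fin d) ℂ)).PosSemidef := by
  have h1 : (Matrix.diagonal (fun i => (c i : ℂ))).PosSemidef := by
    refine Matrix.posSemidef_diagonal_iff.mpr fun i => ?_
    rw [Complex.zero_le_real]
    exact hc i
  simpa [Matrix.star_eq_conjTranspose] using
    h1.mul_mul_conjTranspose_same (U : Matrix (Fin d) (Fin d) ℂ)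

lemma trace_conj (U : Matrix.unitaryGroup (Fin d) ℂ) (c : Fin d → ℝ) :
    ((U : Matrix (Fin d) (Fin d) ℂ) * Matrix.diagonal (fun i => (c i : ℂ)) *
      star (U : Matrix (Fin d) (Fin d) ℂ)).trace = ((∑ i, c i : ℝ) : ℂ) := by
  rw [Matrix.trace_mul_cycle, Matrix.mem_unitaryGroup_iff'.mp U.2, one_mul,
    Matrix.trace_diagonal]
  push_cast
  rfl

lemma trace_conj_mul_conj (U V : Matrix.unitaryGroup (Fin d) ℂ) (a b : Fin d → ℝ) :
    (((U : Matrix (Fin d) (Fin d) ℂ) * Matrix.diagonal (fun i => (a i : ℂ)) *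
        star (U : Matrix (Fin d) (Fin d) ℂ)) *
      ((V : Matrix (Fin d) (Fin d) ℂ) * Matrix.diagonal (fun j => (b j : ℂ)) *
        star (V : Matrix (Fin d) (Fin d) ℂ))).trace
      = ((∑ i, ∑ j, a i * b j *
          Complex.normSq ((star (U : Matrix (Fin d) (Fin d) ℂ) *
            (V : Matrix (Fin d) (Fin d) ℂ)) i j) : ℝ) : ℂ) := by
  set Um : Matrix (Fin d) (Fin d) ℂ := (U : Matrix (Fin d) (Fin d) ℂ) with hUm
  set Vm : Matrix (Fin d) (Fin d) ℂ := (V : Matrix (Fin d) (Fin d) ℂ) with hVm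
  set W : Matrix (Fin d) (Fin d) ℂ := star Um * Vm with hW
  have hUUs : Um * star Um = 1 := Matrix.mem_unitaryGroup_iff.mp U.2
  have key : (Um * Matrix.diagonal (fun i => (a i : ℂ)) * star Um) *
      (Vm * Matrix.diagonal (fun j => (b j : ℂ)) * star Vm)
      = Um * (Matrix.diagonal (fun i => (a i : ℂ)) * W *
          Matrix.diagonal (fun j => (b j : ℂ)) * star W) * star Um := by
    rw [hW, Matrix.star_mul, star_star]
    simp only [mul_assoc]
    rw [hUUs, mul_one]
  rw [key, Matrix.trace_mul_cycle, Matrix.mem_unitaryGroup_iff'.mp U.2, one_mul]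
  have entry : ∀ i j, (Matrix.diagonal (fun i => (a i : ℂ)) * W *
      Matrix.diagonal (fun j => (b j : ℂ))) i j = (a i : ℂ) * W i j * (b j : ℂ) := by
    intro i j
    rw [Matrix.mul_diagonal, Matrix.diagonal_mul]
  rw [Matrix.trace]
  have diag_eq : ∀ i, ((Matrix.diagonal (fun i => (a i : ℂ)) * W *
      Matrix.diagonal (fun j => (b j : ℂ)) * star W)).diag i
      = ∑ j, ((a i * b j * Complex.normSq (W i j) : ℝ) : ℂ) := by
    intro i
    rw [Matrix.diag_apply, Matrix.mul_apply]
    refine Finset.sum_congr rfl fun j _ => ?_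
    rw [entry i j, Matrix.star_apply]
    rw [show (a i : ℂ) * W i j * (b j : ℂ) * star (W i j)
        = ((a i : ℂ) * (b j : ℂ)) * (W i j * star (W i j)) by ring]
    rw [Matrix.star_eq_conjTranspose] at *
    rw [show star (W i j) = (starRingEnd ℂ) (W i j) from rfl, Complex.mul_conj]
    push_cast
    ring
  calc ∑ i, ((Matrix.diagonal (fun i => (a i : ℂ)) * W *
        Matrix.diagonal (fun j => (b j : ℂ)) * star W)).diag i
      = ∑ i, ∑ j, ((a i * b j * Complex.normSq (W i j) : ℝ) : ℂ) := by
        exact Finset.sum_congr rfl fun i _ => diag_eq i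
    _ = ((∑ i, ∑ j, a i * b j * Complex.normSq (W i j) : ℝ) : ℂ) := by
        push_cast; rfl

lemma row_sum_one (W : Matrix (Fin d) (Fin d) ℂ) (hW : W * star W = 1) (i : Fin d) :
    ∑ j, Complex.normSq (W i j) = 1 := by
  have h := congrFun (congrFun hW i) i
  rw [Matrix.mul_apply, Matrix.one_apply_eq] at h
  have : ∑ j, W i j * star (W i j) = 1 := by
    rw [← h]
    refine Finset.sum_congr rfl fun j _ => ?_
    rw [Matrix.star_apply]
  have h2 : ((∑ j, Complex.normSq (W i j) : ℝ) : ℂ) = 1 := by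
    rw [← this]
    push_cast
    refine Finset.sum_congr rfl fun j _ => ?_
    rw [show star (W i j) = (starRingEnd ℂ) (W i j) from rfl, Complex.mul_conj]
  exact_mod_cast h2

lemma col_sum_one (W : Matrix (Fin d) (Fin d) ℂ) (hW : star W * W = 1) (j : Fin d) :
    ∑ i, Complex.normSq (W i j) = 1 := by
  have h := congrFun (congrFun hW j) j
  rw [Matrix.mul_apply, Matrix.one_apply_eq] at h
  have h2 : ((∑ i, Complex.normSq (W i j) : ℝ) : ℂ) = 1 := by
    rw [← h]
    push_cast
    refine Finset.sum_congr rfl fun i _ => ?_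
    rw [Matrix.star_apply, show star (W i j) = (starRingEnd ℂ) (W i j) from rfl,
      mul_comm, Complex.mul_conj]
  exact_mod_cast h2


lemma scalar_both {α : ℝ} (hα : 1 < α) {s b : ℝ} (hs : 0 ≤ s) (hb : 0 < b) :
    α * s + (1 - α) * b ≤ s ^ α * b ^ (1 - α)
    ∧ (α * s + (1 - α) * b = s ^ α * b ^ (1 - α) ↔ s = b) := by
  have hb' : b ≠ 0 := hb.ne'
  have hid : s ^ α * b ^ (1 - α) = b * ((s / b) ^ α) := by
    rw [Real.div_rpow hs hb.le, Real.rpow_sub hb, Real.rpow_one]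
    field_simp
  have hlin : α * s + (1 - α) * b = b * (1 + α * (s / b - 1)) := by
    field_simp; ring
  have h0 : (-1:ℝ) ≤ s / b - 1 := by
    have := div_nonneg hs hb.le; linarith
  have hber : 1 + α * (s / b - 1) ≤ (s / b) ^ α := by
    have := one_add_mul_self_le_rpow_one_add h0 hα.le
    simpa using this
  refine ⟨by rw [hid, hlin]; exact mul_le_mul_of_nonneg_left hber hb.le, ?_, ?_⟩
  · intro h
    by_contra hne
    have hu1 : s / b - 1 ≠ 0 := by
      intro h'
      apply hne
      have : s / b = 1 := by linarith
      rwa [div_eq_one_iff_eq hb'] at this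
    have hstrict := one_add_mul_self_lt_rpow_one_add h0 hu1 hα
    have : b * (1 + α * (s / b - 1)) < b * ((s / b) ^ α) := by
      apply mul_lt_mul_of_pos_left _ hb
      simpa using hstrict
    rw [← hid, ← hlin] at this
    exact absurd h this.ne
  · rintro rfl
    have hss : s ^ α * s ^ (1 - α) = s := by
      rw [← Real.rpow_add hb]; norm_num
    rw [hss]; ring

lemma sum_key {d : ℕ} {α : ℝ} (hα : 1 < α) (t bb : Fin d → ℝ) (c : Fin d → Fin d → ℝ)
    (ht : ∀ i, 0 ≤ t i) (hb : ∀ j, 0 < bb j) (hc : ∀ i j, 0 ≤ c i j)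
    (hrow : ∀ i, ∑ j, c i j = 1) (hcol : ∀ j, ∑ i, c i j = 1)
    (hT : 0 < ∑ i, t i) (hbsum : ∑ j, bb j = 1) :
    (∑ i, t i) ^ α ≤ ∑ i, ∑ j, t i ^ α * bb j ^ (1 - α) * c i j
    ∧ ((∑ i, ∑ j, t i ^ α * bb j ^ (1 - α) * c i j = (∑ i, t i) ^ α)
        ↔ ∀ i j, c i j ≠ 0 → t i = (∑ i, t i) * bb j) := by
  classical
  set T : ℝ := ∑ i, t i with hTdef
  have hTα : 0 < T ^ α := Real.rpow_pos_of_pos hT _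
  set L : Fin d → Fin d → ℝ :=
    fun i j => (T ^ α * (α * (t i / T) + (1 - α) * bb j)) * c i j with hL
  set R : Fin d → Fin d → ℝ := fun i j => t i ^ α * bb j ^ (1 - α) * c i j with hR
  have hTR : ∀ i j, T ^ α * ((t i / T) ^ α * bb j ^ (1 - α)) = t i ^ α * bb j ^ (1 - α) := by
    intro i j
    rw [Real.div_rpow (ht i) hT.le]
    field_simp
  have hLR : ∀ i j, L i j ≤ R i j := by
    intro i j
    have h1 := (scalar_both hα (div_nonneg (ht i) hT.le) (hb j)).1
    have h2 : T ^ α * (α * (t i / T) + (1 - α) * bb j)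
        ≤ t i ^ α * bb j ^ (1 - α) := by
      rw [← hTR i j]
      exact mul_le_mul_of_nonneg_left h1 hTα.le
    exact mul_le_mul_of_nonneg_right h2 (hc i j)
  have hLeq : ∀ i j, (L i j = R i j ↔ (c i j ≠ 0 → t i = T * bb j)) := by
    intro i j
    rcases eq_or_ne (c i j) 0 with h0 | h0
    · simp [hL, hR, h0]
    · have hceq := (scalar_both hα (div_nonneg (ht i) hT.le) (hb j)).2
      constructor
      · intro h hc0
        have h2 : T ^ α * (α * (t i / T) + (1 - α) * bb j) = t i ^ α * bb j ^ (1 - α) :=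
          mul_right_cancel₀ h0 h
        rw [← hTR i j] at h2
        have h3 : α * (t i / T) + (1 - α) * bb j = (t i / T) ^ α * bb j ^ (1 - α) :=
          mul_left_cancel₀ hTα.ne' h2
        have h4 : t i / T = bb j := hceq.mp h3
        field_simp at h4
        linarith [h4]
      · intro h
        have h4 : t i / T = bb j := by
          rw [h h0]; field_simp
        have h3 := hceq.mpr h4
        show T ^ α * (α * (t i / T) + (1 - α) * bb j) * c i j
            = t i ^ α * bb j ^ (1 - α) * c i j
        rw [h3, ← hTR i j]
  have hsumL : ∑ i, ∑ j, L i j = T ^ α := by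
    have expand : ∀ i j, L i j
        = T ^ α * α * (t i / T) * c i j + T ^ α * (1 - α) * bb j * c i j := by
      intro i j; simp only [hL]; ring
    calc ∑ i, ∑ j, L i j
        = ∑ i, ∑ j, (T ^ α * α * (t i / T) * c i j + T ^ α * (1 - α) * bb j * c i j) := by
          exact Finset.sum_congr rfl fun i _ => Finset.sum_congr rfl fun j _ => expand i j
      _ = (∑ i, ∑ j, T ^ α * α * (t i / T) * c i j)
          + ∑ i, ∑ j, T ^ α * (1 - α) * bb j * c i j := by
          rw [← Finset.sum_add_distrib]
          exact Finset.sum_congr rfl fun i _ => Finset.sum_add_distrib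
      _ = T ^ α * α + T ^ α * (1 - α) := by
          congr 1
          · calc ∑ i, ∑ j, T ^ α * α * (t i / T) * c i j
                = ∑ i, T ^ α * α * (t i / T) * ∑ j, c i j := by
                  exact Finset.sum_congr rfl fun i _ => by rw [Finset.mul_sum]
              _ = ∑ i, T ^ α * α * (t i / T) := by
                  exact Finset.sum_congr rfl fun i _ => by rw [hrow i, mul_one]
              _ = T ^ α * α * ∑ i, (t i / T) := by rw [Finset.mul_sum]
              _ = T ^ α * α := by
                  rw [← Finset.sum_div, ← hTdef, div_self hT.ne', mul_one]
          · calc ∑ i, ∑ j, T ^ α * (1 - α) * bb j * c i j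
                = ∑ j, ∑ i, T ^ α * (1 - α) * bb j * c i j := Finset.sum_comm
              _ = ∑ j, T ^ α * (1 - α) * bb j * ∑ i, c i j := by
                  exact Finset.sum_congr rfl fun j _ => by rw [Finset.mul_sum]
              _ = ∑ j, T ^ α * (1 - α) * bb j := by
                  exact Finset.sum_congr rfl fun j _ => by rw [hcol j, mul_one]
              _ = T ^ α * (1 - α) * ∑ j, bb j := by rw [Finset.mul_sum]
              _ = T ^ α * (1 - α) := by rw [hbsum, mul_one]
      _ = T ^ α := by ring
  have hle : T ^ α ≤ ∑ i, ∑ j, R i j := by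
    rw [← hsumL]
    exact Finset.sum_le_sum fun i _ => Finset.sum_le_sum fun j _ => hLR i j
  refine ⟨hle, ?_⟩
  have hprodL : ∑ p : Fin d × Fin d, L p.1 p.2 = ∑ i, ∑ j, L i j := Fintype.sum_prod_type _
  have hprodR : ∑ p : Fin d × Fin d, R p.1 p.2 = ∑ i, ∑ j, R i j := Fintype.sum_prod_type _
  constructor
  · intro h
    intro i j
    have hsum_eq : ∑ p : Fin d × Fin d, L p.1 p.2 = ∑ p : Fin d × Fin d, R p.1 p.2 := by
      rw [hprodL, hprodR, hsumL, h]
    have := (Finset.sum_eq_sum_iff_of_le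
      (fun p _ => hLR p.1 p.2)).mp hsum_eq (i, j) (Finset.mem_univ _)
    have h5 : L i j = R i j := by simpa using this
    exact (hLeq i j).mp h5
  · intro h
    have : ∀ i j, R i j = L i j := fun i j => ((hLeq i j).mpr (h i j)).symm
    calc ∑ i, ∑ j, R i j = ∑ i, ∑ j, L i j :=
          Finset.sum_congr rfl fun i _ => Finset.sum_congr rfl fun j _ => this i j
      _ = T ^ α := hsumL


lemma posSemidef_real_smul {M : Matrix (Fin d) (Fin d) ℂ} (hM : M.PosSemidef)
    {c : ℝ} (hc : 0 ≤ c) : ((c : ℂ) • M).PosSemidef := by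
  constructor
  · have : ((c : ℂ) • M)ᴴ = (c : ℂ) • M := by
      rw [Matrix.conjTranspose_smul, hM.1.eq]
      congr 1
      exact Complex.conj_ofReal c
    exact this
  · intro x
    have h := mul_nonneg (Complex.zero_le_real.mpr hc) (hM.2 x)
    convert h using 1
    simp only [Matrix.smul_apply, smul_eq_mul, Finsupp.mul_sum]
    exact Finsupp.sum_congr fun i _ => Finsupp.sum_congr fun j _ => by ring

lemma trace_eq_sum_ev {M : Matrix (Fin d) (Fin d) ℂ} (hM : M.IsHermitian) :
    M.trace = ((∑ i, hM.eigenvalues i : ℝ) : ℂ) := by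
  have hspec : M = (hM.eigenvectorUnitary : Matrix (Fin d) (Fin d) ℂ) *
      Matrix.diagonal (fun i => (hM.eigenvalues i : ℂ)) *
      star (hM.eigenvectorUnitary : Matrix (Fin d) (Fin d) ℂ) := by
    convert hM.spectral_theorem using 2
    rfl
  rw [congrArg Matrix.trace hspec, trace_conj]

end HolevoAux

/-- **The `α`-Holevo quantity lower-bounds the relative `α`-entropy to product states.**
With `ζ = (∑ x, p x • ρ x ^ α)^(1/α)` and `μ = ζ / tr ζ`:
`D_α(ρ_{XQ}‖ρ_X ⊗ σ) ≥ χ_α({p x, ρ x})`, i.e.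
`(1/(α−1)) log₂ tr((∑ x, p x • ρ x^α) σ^{1−α}) ≥ (α/(α−1)) log₂ tr ζ`,
with equality iff `σ = μ`. -/
theorem renyi_relative_entropy_ge_chiAlpha
    (d m : ℕ) (α : ℝ) (hα : 1 < α)
    (p : Fin m → ℝ) (hp_nonneg : ∀ x, 0 ≤ p x) (hp_sum : ∑ x, p x = 1)
    (ρ : Fin m → Matrix (Fin d) (Fin d) ℂ)
    (hρ_psd : ∀ x, (ρ x).PosSemidef) (hρ_tr : ∀ x, (ρ x).trace = 1)
    (σ : Matrix (Fin d) (Fin d) ℂ) (hσ_pd : σ.PosDef) (hσ_tr : σ.trace = 1)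
    (ζ μ : Matrix (Fin d) (Fin d) ℂ)
    (hζ : ζ = mpow (∑ x, (p x : ℂ) • mpow (ρ x) α) (1 / α))
    (hμ : μ = (ζ.trace)⁻¹ • ζ) :
    (α / (α - 1)) * Real.logb 2 ((ζ.trace).re) ≤
      (1 / (α - 1)) *
        Real.logb 2 (((∑ x, (p x : ℂ) • mpow (ρ x) α) * mpow σ (1 - α)).trace).re ∧
    ((1 / (α - 1)) *
        Real.logb 2 (((∑ x, (p x : ℂ) • mpow (ρ x) α) * mpow σ (1 - α)).trace).re =
      (α / (α - 1)) * Real.logb 2 ((ζ.trace).re) ↔ σ = μ) := by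
  classical
  have hα0 : (0:ℝ) < α := by linarith
  have hα1 : (0:ℝ) < α - 1 := by linarith
  set A : Matrix (Fin d) (Fin d) ℂ := ∑ x, (p x : ℂ) • mpow (ρ x) α with hA_def
  have hmp_psd : ∀ x, (mpow (ρ x) α).PosSemidef := by
    intro x
    rw [mpow, dif_pos (hρ_psd x).1]
    refine HolevoAux.posSemidef_conj _ _ fun i => ?_
    split_ifs with h
    · exact le_refl 0
    · exact Real.rpow_nonneg ((hρ_psd x).eigenvalues_nonneg i) α
  have hA_psd : A.PosSemidef := by
    rw [hA_def]
    exact Finset.sum_induction _ _ (fun a b ha hb => ha.add hb) Matrix.PosSemidef.zero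
      fun x _ => HolevoAux.posSemidef_real_smul (hmp_psd x) (hp_nonneg x)
  have hA : A.IsHermitian := hA_psd.1
  obtain ⟨Ug, a, ha0, hAspec⟩ :
      ∃ (Ug : Matrix.unitaryGroup (Fin d) ℂ) (a : Fin d → ℝ), (∀ i, 0 ≤ a i) ∧
        A = (Ug : Matrix (Fin d) (Fin d) ℂ) * Matrix.diagonal (fun i => (a i : ℂ)) *
          star (Ug : Matrix (Fin d) (Fin d) ℂ) ∧
        ζ = (Ug : Matrix (Fin d) (Fin d) ℂ) *
          Matrix.diagonal (fun i => ((if a i = 0 then (0:ℝ) else a i ^ (1/α) : ℝ) : ℂ)) *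
          star (Ug : Matrix (Fin d) (Fin d) ℂ) := by
    refine ⟨hA.eigenvectorUnitary, hA.eigenvalues, hA_psd.eigenvalues_nonneg, ?_, ?_⟩
    · convert hA.spectral_theorem using 2
      rfl
    · rw [hζ, mpow, dif_pos hA]
  obtain ⟨hAspec, hζspec0⟩ := hAspec
  set t : Fin d → ℝ := fun i => if a i = 0 then (0:ℝ) else a i ^ (1/α) with ht_def
  have hζspec : ζ = (Ug : Matrix (Fin d) (Fin d) ℂ) *
      Matrix.diagonal (fun i => (t i : ℂ)) * star (Ug : Matrix (Fin d) (Fin d) ℂ) := hζspec0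
  have ht0 : ∀ i, 0 ≤ t i := by
    intro i
    simp only [ht_def]
    split_ifs
    · exact le_refl 0
    · exact Real.rpow_nonneg (ha0 i) _
  have hat : ∀ i, a i = t i ^ α := by
    intro i
    simp only [ht_def]
    split_ifs with h
    · rw [h, Real.zero_rpow (ne_of_gt hα0)]
    · rw [← Real.rpow_mul (ha0 i), one_div, inv_mul_cancel₀ (ne_of_gt hα0), Real.rpow_one]
  -- trace of A and positivity
  have htrA : A.trace = ((∑ i, a i : ℝ) : ℂ) := by
    rw [congrArg Matrix.trace hAspec, HolevoAux.trace_conj]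
  have htrA2 : A.trace = ∑ x, (p x : ℂ) * (mpow (ρ x) α).trace := by
    rw [hA_def, Matrix.trace_sum]
    exact Finset.sum_congr rfl fun x _ => by rw [Matrix.trace_smul, smul_eq_mul]
  have hmtr : ∀ x, ∃ r : ℝ, 0 < r ∧ (mpow (ρ x) α).trace = (r : ℂ) := by
    intro x
    have hx := (hρ_psd x).1
    have hlam0 : ∀ k, 0 ≤ hx.eigenvalues k := (hρ_psd x).eigenvalues_nonneg
    have hlamsum : ∑ k, hx.eigenvalues k = 1 := by
      have h1 := HolevoAux.trace_eq_sum_ev hx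
      rw [hρ_tr x] at h1
      exact_mod_cast h1.symm
    obtain ⟨k0, hk0⟩ : ∃ k, 0 < hx.eigenvalues k := by
      by_contra hno
      push_neg at hno
      have : ∑ k, hx.eigenvalues k ≤ 0 := Finset.sum_nonpos fun k _ => hno k
      rw [hlamsum] at this; linarith
    refine ⟨∑ k, (if hx.eigenvalues k = 0 then (0:ℝ) else hx.eigenvalues k ^ α), ?_, ?_⟩
    · refine Finset.sum_pos' (fun k _ => ?_) ⟨k0, Finset.mem_univ _, ?_⟩
      · split_ifs
        · exact le_refl 0
        · exact Real.rpow_nonneg (hlam0 k) α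
      · rw [if_neg (ne_of_gt hk0)]
        exact Real.rpow_pos_of_pos hk0 α
    · rw [mpow, dif_pos hx, HolevoAux.trace_conj]
  have hsum_a_pos : 0 < ∑ i, a i := by
    choose r hr hrr using hmtr
    have h2 : ((∑ i, a i : ℝ) : ℂ) = ((∑ x, p x * r x : ℝ) : ℂ) := by
      rw [← htrA, htrA2]
      push_cast
      exact Finset.sum_congr rfl fun x _ => by rw [hrr x]
    have h3 : ∑ i, a i = ∑ x, p x * r x := by exact_mod_cast h2
    rw [h3]
    obtain ⟨x0, hx0⟩ : ∃ x, 0 < p x := by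
      by_contra hno
      push_neg at hno
      have : ∑ x, p x ≤ 0 := Finset.sum_nonpos fun x _ => hno x
      rw [hp_sum] at this; linarith
    exact Finset.sum_pos' (fun x _ => mul_nonneg (hp_nonneg x) (hr x).le)
      ⟨x0, Finset.mem_univ _, mul_pos hx0 (hr x0)⟩
  have hTpos : 0 < ∑ i, t i := by
    obtain ⟨i0, hi0⟩ : ∃ i, 0 < a i := by
      by_contra hno
      push_neg at hno
      have : ∑ i, a i ≤ 0 := Finset.sum_nonpos fun i _ => hno i
      linarith
    refine Finset.sum_pos' (fun i _ => ht0 i) ⟨i0, Finset.mem_univ _, ?_⟩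
    have ht1 : t i0 = a i0 ^ (1/α) := by
      simp only [ht_def]
      rw [if_neg (ne_of_gt hi0)]
    rw [ht1]
    exact Real.rpow_pos_of_pos hi0 _
  have hζtr : ζ.trace = ((∑ i, t i : ℝ) : ℂ) := by
    rw [congrArg Matrix.trace hζspec, HolevoAux.trace_conj]
  -- σ decomposition
  have hσh : σ.IsHermitian := hσ_pd.1
  obtain ⟨Vg, b, hb0, hσspec, hmσ0⟩ :
      ∃ (Vg : Matrix.unitaryGroup (Fin d) ℂ) (b : Fin d → ℝ), (∀ j, 0 < b j) ∧
        σ = (Vg : Matrix (Fin d) (Fin d) ℂ) * Matrix.diagonal (fun j => (b j : ℂ)) *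
          star (Vg : Matrix (Fin d) (Fin d) ℂ) ∧
        mpow σ (1 - α) = (Vg : Matrix (Fin d) (Fin d) ℂ) *
          Matrix.diagonal (fun j => ((if b j = 0 then (0:ℝ) else b j ^ (1-α) : ℝ) : ℂ)) *
          star (Vg : Matrix (Fin d) (Fin d) ℂ) := by
    refine ⟨hσh.eigenvectorUnitary, hσh.eigenvalues, hσ_pd.eigenvalues_pos, ?_, ?_⟩
    · convert hσh.spectral_theorem using 2
      rfl
    · rw [mpow, dif_pos hσh]
  have hmσ : mpow σ (1 - α) = (Vg : Matrix (Fin d) (Fin d) ℂ) *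
      Matrix.diagonal (fun j => ((b j ^ (1-α) : ℝ) : ℂ)) *
      star (Vg : Matrix (Fin d) (Fin d) ℂ) := by
    rw [hmσ0]
    have hfe : (fun j => ((if b j = 0 then (0:ℝ) else b j ^ (1-α) : ℝ) : ℂ))
        = fun j => ((b j ^ (1-α) : ℝ) : ℂ) := by
      funext j
      rw [if_neg (ne_of_gt (hb0 j))]
    rw [hfe]
  have hbsum : ∑ j, b j = 1 := by
    have h1 := congrArg Matrix.trace hσspec
    rw [hσ_tr, HolevoAux.trace_conj] at h1
    exact_mod_cast h1.symm
  -- the W matrix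
  set Wm : Matrix (Fin d) (Fin d) ℂ :=
    star (Ug : Matrix (Fin d) (Fin d) ℂ) * (Vg : Matrix (Fin d) (Fin d) ℂ) with hWm
  have hUsU : star (Ug : Matrix (Fin d) (Fin d) ℂ) * (Ug : Matrix (Fin d) (Fin d) ℂ) = 1 :=
    Matrix.mem_unitaryGroup_iff'.mp Ug.2
  have hUUs : (Ug : Matrix (Fin d) (Fin d) ℂ) * star (Ug : Matrix (Fin d) (Fin d) ℂ) = 1 :=
    Matrix.mem_unitaryGroup_iff.mp Ug.2
  have hVsV : star (Vg : Matrix (Fin d) (Fin d) ℂ) * (Vg : Matrix (Fin d) (Fin d) ℂ) = 1 :=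
    Matrix.mem_unitaryGroup_iff'.mp Vg.2
  have hVVs : (Vg : Matrix (Fin d) (Fin d) ℂ) * star (Vg : Matrix (Fin d) (Fin d) ℂ) = 1 :=
    Matrix.mem_unitaryGroup_iff.mp Vg.2
  have hWWs : Wm * star Wm = 1 := by
    rw [hWm, Matrix.star_mul, star_star, mul_assoc,
      ← mul_assoc (Vg : Matrix (Fin d) (Fin d) ℂ), hVVs, one_mul, hUsU]
  have hWsW : star Wm * Wm = 1 := by
    rw [hWm, Matrix.star_mul, star_star, mul_assoc,
      ← mul_assoc (Ug : Matrix (Fin d) (Fin d) ℂ), hUUs, one_mul, hVsV]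
  set c : Fin d → Fin d → ℝ := fun i j => Complex.normSq (Wm i j) with hc_def
  have hrow : ∀ i, ∑ j, c i j = 1 := fun i => HolevoAux.row_sum_one Wm hWWs i
  have hcol : ∀ j, ∑ i, c i j = 1 := fun j => HolevoAux.col_sum_one Wm hWsW j
  -- the trace S
  have hStr : (A * mpow σ (1 - α)).trace
      = ((∑ i, ∑ j, a i * b j ^ (1-α) * c i j : ℝ) : ℂ) := by
    have hprod : A * mpow σ (1 - α)
        = ((Ug : Matrix (Fin d) (Fin d) ℂ) * Matrix.diagonal (fun i => (a i : ℂ)) *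
            star (Ug : Matrix (Fin d) (Fin d) ℂ)) *
          ((Vg : Matrix (Fin d) (Fin d) ℂ) *
            Matrix.diagonal (fun j => ((b j ^ (1-α) : ℝ) : ℂ)) *
            star (Vg : Matrix (Fin d) (Fin d) ℂ)) := by
      rw [← hAspec, ← hmσ]
    rw [congrArg Matrix.trace hprod, HolevoAux.trace_conj_mul_conj]
  have hSS : (∑ i, ∑ j, a i * b j ^ (1-α) * c i j)
      = ∑ i, ∑ j, t i ^ α * b j ^ (1-α) * c i j :=
    Finset.sum_congr rfl fun i _ => Finset.sum_congr rfl fun j _ => by rw [← hat i]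
  have hkey := HolevoAux.sum_key hα t b c ht0 hb0 (fun i j => Complex.normSq_nonneg _)
    hrow hcol hTpos hbsum
  -- μ spectral form
  have hdiag : ((∑ i, t i : ℝ) : ℂ)⁻¹ • Matrix.diagonal (fun i => (t i : ℂ))
      = Matrix.diagonal (fun i => (((∑ i, t i)⁻¹ * t i : ℝ) : ℂ)) := by
    ext i j
    rw [Matrix.smul_apply]
    rcases eq_or_ne i j with rfl | hij
    · rw [Matrix.diagonal_apply_eq, Matrix.diagonal_apply_eq, smul_eq_mul]
      push_cast
      ring
    · rw [Matrix.diagonal_apply_ne _ hij, Matrix.diagonal_apply_ne _ hij, smul_zero]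
  have hμspec : μ = (Ug : Matrix (Fin d) (Fin d) ℂ) *
      Matrix.diagonal (fun i => (((∑ i, t i)⁻¹ * t i : ℝ) : ℂ)) *
      star (Ug : Matrix (Fin d) (Fin d) ℂ) := by
    rw [hμ, hζtr, hζspec, ← Matrix.smul_mul, ← Matrix.mul_smul, hdiag]
  -- the equality condition
  have hcond_to : (∀ i j, c i j ≠ 0 → t i = (∑ i, t i) * b j) → σ = μ := by
    intro hcond
    have hDW : Matrix.diagonal (fun i => (((∑ i, t i)⁻¹ * t i : ℝ) : ℂ)) * Wm
        = Wm * Matrix.diagonal (fun j => (b j : ℂ)) := by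
      ext i j
      rw [Matrix.diagonal_mul, Matrix.mul_diagonal]
      rcases eq_or_ne (Wm i j) 0 with h0 | h0
      · rw [h0]; ring
      · have hcij : c i j ≠ 0 := by
          simp only [hc_def]
          exact fun hh => h0 (Complex.normSq_eq_zero.mp hh)
        have h1 := hcond i j hcij
        have h2 : (∑ i, t i)⁻¹ * t i = b j := by
          rw [h1, ← mul_assoc, inv_mul_cancel₀ (ne_of_gt hTpos), one_mul]
        rw [h2, mul_comm]
    have hUW : (Ug : Matrix (Fin d) (Fin d) ℂ) * Wm = (Vg : Matrix (Fin d) (Fin d) ℂ) := by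
      rw [hWm, ← mul_assoc, hUUs, one_mul]
    have hmid : Wm * Matrix.diagonal (fun j => (b j : ℂ)) * star Wm
        = Matrix.diagonal (fun i => (((∑ i, t i)⁻¹ * t i : ℝ) : ℂ)) := by
      rw [← hDW, mul_assoc, hWWs, mul_one]
    calc σ = (Vg : Matrix (Fin d) (Fin d) ℂ) * Matrix.diagonal (fun j => (b j : ℂ)) *
          star (Vg : Matrix (Fin d) (Fin d) ℂ) := hσspec
      _ = ((Ug : Matrix (Fin d) (Fin d) ℂ) * Wm) * Matrix.diagonal (fun j => (b j : ℂ)) *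
          star ((Ug : Matrix (Fin d) (Fin d) ℂ) * Wm) := by rw [hUW]
      _ = (Ug : Matrix (Fin d) (Fin d) ℂ) *
          (Wm * Matrix.diagonal (fun j => (b j : ℂ)) * star Wm) *
          star (Ug : Matrix (Fin d) (Fin d) ℂ) := by
          rw [Matrix.star_mul]
          simp only [mul_assoc]
      _ = (Ug : Matrix (Fin d) (Fin d) ℂ) *
          Matrix.diagonal (fun i => (((∑ i, t i)⁻¹ * t i : ℝ) : ℂ)) *
          star (Ug : Matrix (Fin d) (Fin d) ℂ) := by rw [hmid]
      _ = μ := hμspec.symm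
  have hto_cond : σ = μ → (∀ i j, c i j ≠ 0 → t i = (∑ i, t i) * b j) := by
    intro hσμ i j hcij
    have heq1 : (Ug : Matrix (Fin d) (Fin d) ℂ) *
        Matrix.diagonal (fun i => (((∑ i, t i)⁻¹ * t i : ℝ) : ℂ)) *
        star (Ug : Matrix (Fin d) (Fin d) ℂ)
        = (Vg : Matrix (Fin d) (Fin d) ℂ) * Matrix.diagonal (fun j => (b j : ℂ)) *
          star (Vg : Matrix (Fin d) (Fin d) ℂ) := by
      rw [← hμspec, ← hσμ, hσspec]
    have hDW : Matrix.diagonal (fun i => (((∑ i, t i)⁻¹ * t i : ℝ) : ℂ)) * Wm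
        = Wm * Matrix.diagonal (fun j => (b j : ℂ)) := by
      have e1 : star (Ug : Matrix (Fin d) (Fin d) ℂ) *
          ((Ug : Matrix (Fin d) (Fin d) ℂ) *
            Matrix.diagonal (fun i => (((∑ i, t i)⁻¹ * t i : ℝ) : ℂ)) *
            star (Ug : Matrix (Fin d) (Fin d) ℂ)) * (Vg : Matrix (Fin d) (Fin d) ℂ)
          = Matrix.diagonal (fun i => (((∑ i, t i)⁻¹ * t i : ℝ) : ℂ)) * Wm := by
        rw [hWm]
        rw [show star (Ug : Matrix (Fin d) (Fin d) ℂ) *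
            ((Ug : Matrix (Fin d) (Fin d) ℂ) *
              Matrix.diagonal (fun i => (((∑ i, t i)⁻¹ * t i : ℝ) : ℂ)) *
              star (Ug : Matrix (Fin d) (Fin d) ℂ)) * (Vg : Matrix (Fin d) (Fin d) ℂ)
            = (star (Ug : Matrix (Fin d) (Fin d) ℂ) * (Ug : Matrix (Fin d) (Fin d) ℂ)) *
              Matrix.diagonal (fun i => (((∑ i, t i)⁻¹ * t i : ℝ) : ℂ)) *
              (star (Ug : Matrix (Fin d) (Fin d) ℂ) * (Vg : Matrix (Fin d) (Fin d) ℂ)) by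
          noncomm_ring]
        rw [hUsU, one_mul]
      have e2 : star (Ug : Matrix (Fin d) (Fin d) ℂ) *
          ((Vg : Matrix (Fin d) (Fin d) ℂ) * Matrix.diagonal (fun j => (b j : ℂ)) *
            star (Vg : Matrix (Fin d) (Fin d) ℂ)) * (Vg : Matrix (Fin d) (Fin d) ℂ)
          = Wm * Matrix.diagonal (fun j => (b j : ℂ)) := by
        rw [hWm]
        rw [show star (Ug : Matrix (Fin d) (Fin d) ℂ) *
            ((Vg : Matrix (Fin d) (Fin d) ℂ) * Matrix.diagonal (fun j => (b j : ℂ)) *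
              star (Vg : Matrix (Fin d) (Fin d) ℂ)) * (Vg : Matrix (Fin d) (Fin d) ℂ)
            = (star (Ug : Matrix (Fin d) (Fin d) ℂ) * (Vg : Matrix (Fin d) (Fin d) ℂ)) *
              Matrix.diagonal (fun j => (b j : ℂ)) *
              (star (Vg : Matrix (Fin d) (Fin d) ℂ) * (Vg : Matrix (Fin d) (Fin d) ℂ)) by
          noncomm_ring]
        rw [hVsV, mul_one]
      rw [← e1, ← e2]
      exact congrArg (fun X => star (Ug : Matrix (Fin d) (Fin d) ℂ) * X *
        (Vg : Matrix (Fin d) (Fin d) ℂ)) heq1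
    have hW0 : Wm i j ≠ 0 := by
      intro hh
      apply hcij
      simp only [hc_def]
      rw [hh, Complex.normSq_zero]
    have hent := congrFun (congrFun hDW i) j
    rw [Matrix.diagonal_mul, Matrix.mul_diagonal, mul_comm] at hent
    have h3 : (((∑ i, t i)⁻¹ * t i : ℝ) : ℂ) = ((b j : ℝ) : ℂ) :=
      mul_left_cancel₀ hW0 hent
    have h4 : (∑ i, t i)⁻¹ * t i = b j := Complex.ofReal_inj.mp h3
    rw [← h4, ← mul_assoc, mul_inv_cancel₀ (ne_of_gt hTpos), one_mul]
  have hcond_iff :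
      (∑ i, ∑ j, t i ^ α * b j ^ (1-α) * c i j = (∑ i, t i) ^ α) ↔ σ = μ :=
    hkey.2.trans ⟨hcond_to, hto_cond⟩
  -- put the goal in real terms
  have hre : ((A * mpow σ (1 - α)).trace).re = ∑ i, ∑ j, t i ^ α * b j ^ (1-α) * c i j := by
    rw [hStr, Complex.ofReal_re, hSS]
  have hreζ : (ζ.trace).re = ∑ i, t i := by rw [hζtr, Complex.ofReal_re]
  rw [hre, hreζ]
  have hTα_pos : 0 < (∑ i, t i) ^ α := Real.rpow_pos_of_pos hTpos α
  have hSpos : 0 < ∑ i, ∑ j, t i ^ α * b j ^ (1-α) * c i j := lt_of_lt_of_le hTα_pos hkey.1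
  have hlogid : (α / (α - 1)) * Real.logb 2 (∑ i, t i)
      = (1 / (α - 1)) * Real.logb 2 ((∑ i, t i) ^ α) := by
    rw [Real.logb, Real.logb, Real.log_rpow hTpos]
    ring
  constructor
  · rw [hlogid]
    exact mul_le_mul_of_nonneg_left
      (Real.logb_le_logb_of_le one_lt_two hTα_pos hkey.1)
      (one_div_pos.mpr hα1).le
  · constructor
    · intro h
      rw [hlogid] at h
      have h2 : Real.logb 2 (∑ i, ∑ j, t i ^ α * b j ^ (1-α) * c i j)
          = Real.logb 2 ((∑ i, t i) ^ α) :=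
        mul_left_cancel₀ (one_div_ne_zero (ne_of_gt hα1)) h
      have h3 : (∑ i, ∑ j, t i ^ α * b j ^ (1-α) * c i j) = (∑ i, t i) ^ α :=
        Real.logb_injOn_pos one_lt_two (Set.mem_Ioi.mpr hSpos) (Set.mem_Ioi.mpr hTα_pos) h2
      exact hcond_iff.mp h3
    · intro h
      rw [hcond_iff.mpr h]
      exact hlogid.symm
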